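/- For every real x with 0 < x < 1, the series Σ_{j=1}^∞ ((1/2)_j/(j·j!)) x^j converges and Σ_{j=1}^∞ ((1/2)_j/(j·j!)) x^j = 2·ln(2/(1+√(1−x))). Consequently, for 0 < x < 1, Σ_{j=1}^∞ ((1/2)_j/(j·j!)) (−x)^j = −2·ln((1+√(1+x))/2). -/

import Mathlib

open Real Finset

/-- Pochhammer symbol `(a)_n = a (a+1) ⋯ (a+n-1)`. -/
noncomputable def poch (a : ℝ) (n : ℕ) : ℝ := ∏ i ∈ Finset.range n, (a + i)

noncomputable def cc (j : ℕ) : ℝ := poch (1/2) j / (Nat.factorial j : ℝ)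

lemma poch_succ' (a : ℝ) (n : ℕ) : poch a (n+1) = poch a n * (a + n) := by
  simp [poch, Finset.prod_range_succ]

lemma cc_zero : cc 0 = 1 := by simp [cc, poch]

lemma cc_one : cc 1 = 1/2 := by
  simp [cc, poch, Nat.factorial]

lemma cc_pos (j : ℕ) : 0 < cc j := by
  apply div_pos
  · exact Finset.prod_pos fun i _ => by positivity
  · exact_mod_cast Nat.factorial_pos j

lemma cc_rec (j : ℕ) : cc (j+1) * ((j:ℝ)+1) = cc j * ((j:ℝ) + 1/2) := by
  have hf : (Nat.factorial (j+1) : ℝ) = ((j:ℝ)+1) * (Nat.factorial j : ℝ) := by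
    rw [Nat.factorial_succ]; push_cast; ring
  have h0 : (Nat.factorial j : ℝ) ≠ 0 := by
    exact_mod_cast (Nat.factorial_pos j).ne'
  have h1 : ((j:ℝ)+1) ≠ 0 := by positivity
  rw [cc, cc, poch_succ', hf]
  field_simp
  ring

lemma cc_le_one (j : ℕ) : cc j ≤ 1 := by
  induction j with
  | zero => simp [cc_zero]
  | succ n ih =>
    have h1 : (0:ℝ) < (n:ℝ)+1 := by positivity
    have hle : cc (n+1) * ((n:ℝ)+1) ≤ 1 * ((n:ℝ)+1) := by
      rw [cc_rec n]
      nlinarith [cc_pos n]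
    exact le_of_mul_le_mul_right (by simpa using hle) h1

noncomputable def Sfun (z : ℝ) : ℝ := ∑' j : ℕ, cc j * z ^ j
noncomputable def Tfun (z : ℝ) : ℝ := ∑' j : ℕ, ((j:ℝ)+1) * cc (j+1) * z ^ j
noncomputable def Ufun (z : ℝ) : ℝ := ∑' j : ℕ, cc (j+1) * z ^ j

lemma summable_nmul {r : ℝ} (h0 : 0 ≤ r) (h1 : r < 1) :
    Summable (fun n : ℕ => ((n:ℝ)+1) * r^n) := by
  have h := summable_pow_mul_geometric_of_norm_lt_one (R := ℝ) 1
    (by rwa [Real.norm_eq_abs, abs_of_nonneg h0])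
  have h2 := h.add (summable_geometric_of_lt_one h0 h1)
  refine h2.congr fun n => ?_

  ring

lemma summable_S {y : ℝ} (hy : |y| < 1) : Summable (fun j : ℕ => cc j * y^j) := by
  refine Summable.of_norm_bounded (summable_geometric_of_lt_one (abs_nonneg y) hy) fun j => ?_
  rw [Real.norm_eq_abs, abs_mul, abs_pow, abs_of_pos (cc_pos j)]
  calc cc j * |y|^j ≤ 1 * |y|^j := by gcongr; exact cc_le_one j
    _ = |y|^j := one_mul _

lemma summable_U {y : ℝ} (hy : |y| < 1) : Summable (fun j : ℕ => cc (j+1) * y^j) := by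
  refine Summable.of_norm_bounded (summable_geometric_of_lt_one (abs_nonneg y) hy) fun j => ?_
  rw [Real.norm_eq_abs, abs_mul, abs_pow, abs_of_pos (cc_pos (j+1))]
  calc cc (j+1) * |y|^j ≤ 1 * |y|^j := by gcongr; exact cc_le_one (j+1)
    _ = |y|^j := one_mul _

lemma summable_T {y : ℝ} (hy : |y| < 1) :
    Summable (fun j : ℕ => ((j:ℝ)+1) * cc (j+1) * y^j) := by
  refine Summable.of_norm_bounded (summable_nmul (abs_nonneg y) hy) fun j => ?_
  rw [Real.norm_eq_abs, abs_mul, abs_mul, abs_pow, abs_of_pos (cc_pos (j+1)),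
    abs_of_nonneg (by positivity : (0:ℝ) ≤ (j:ℝ)+1)]
  calc ((j:ℝ)+1) * cc (j+1) * |y|^j ≤ ((j:ℝ)+1) * 1 * |y|^j := by
        gcongr; exact cc_le_one (j+1)
    _ = ((j:ℝ)+1) * |y|^j := by ring

lemma const_of_hasDerivAt_zero {f : ℝ → ℝ} {a b x y : ℝ}
    (h : ∀ z ∈ Set.Ioo a b, HasDerivAt f 0 z) (hx : x ∈ Set.Ioo a b)
    (hy : y ∈ Set.Ioo a b) : f x = f y := by
  refine (convex_Ioo a b).is_const_of_fderivWithin_eq_zero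
    (fun z hz => (h z hz).differentiableAt.differentiableWithinAt) (fun z hz => ?_) hx hy
  rw [fderivWithin_of_isOpen isOpen_Ioo hz, (h z hz).hasFDerivAt.fderiv]
  ext
  simp

lemma hasDerivAt_S {y : ℝ} (hy : |y| < 1) : HasDerivAt Sfun (Tfun y) y := by
  set r : ℝ := (1 + |y|)/2 with hr
  have hr0 : 0 ≤ r := by positivity
  have hr1 : r < 1 := by rw [hr]; linarith
  have hyr : |y| < r := by rw [hr]; linarith [abs_nonneg y]
  have hu : Summable (fun n : ℕ => (n:ℝ) * r^(n-1)) := by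
    rw [← summable_nat_add_iff 1]
    refine (summable_nmul hr0 hr1).congr fun n => ?_
    push_cast [Nat.add_sub_cancel]
    ring
  have hball : y ∈ Metric.ball (0:ℝ) r := by
    rw [Metric.mem_ball, Real.dist_eq, sub_zero]; exact hyr
  have h0ball : (0:ℝ) ∈ Metric.ball (0:ℝ) r := by
    rw [Metric.mem_ball, Real.dist_eq, sub_zero, abs_zero]
    linarith [abs_nonneg y]
  have key := hasDerivAt_tsum_of_isPreconnected (F := ℝ)
    (u := fun n : ℕ => (n:ℝ) * r^(n-1)) (t := Metric.ball (0:ℝ) r)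
    (g := fun n z => cc n * z^n) (g' := fun n z => cc n * ((n:ℝ) * z^(n-1)))
    (y₀ := 0) (y := y) hu Metric.isOpen_ball
    (convex_ball (0:ℝ) r).isPreconnected
    (fun n z _ => (hasDerivAt_pow n z).const_mul (cc n))
    (fun n z hz => by
      have hzr : |z| ≤ r := by
        rw [Metric.mem_ball, Real.dist_eq, sub_zero] at hz; exact hz.le
      rw [Real.norm_eq_abs, abs_mul, abs_mul, abs_pow, abs_of_pos (cc_pos n),
        abs_of_nonneg (Nat.cast_nonneg n)]
      calc cc n * ((n:ℝ) * |z|^(n-1)) ≤ 1 * ((n:ℝ) * r^(n-1)) := by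
            gcongr
            · exact cc_le_one n
          _ = (n:ℝ) * r^(n-1) := one_mul _)
    h0ball
    ((hasSum_single (f := fun n : ℕ => cc n * (0:ℝ)^n) 0
      (fun b hb => by simp [zero_pow hb])).summable)
    hball
  have hT : HasSum (fun j : ℕ => ((j:ℝ)+1) * cc (j+1) * y^j) (Tfun y) :=
    (summable_T hy).hasSum
  have hfeq : (fun n : ℕ => (fun m : ℕ => cc m * ((m:ℝ) * y^(m-1))) (n+1))
      = fun n : ℕ => ((n:ℝ)+1) * cc (n+1) * y^n := by
    funext n
    simp only [Nat.add_sub_cancel]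
    push_cast
    ring
  have h2 : HasSum (fun m : ℕ => cc m * ((m:ℝ) * y^(m-1))) (Tfun y) := by
    have := (hasSum_nat_add_iff (f := fun m : ℕ => cc m * ((m:ℝ) * y^(m-1))) 1).mp
      (by rw [hfeq]; exact hT)
    simpa using this
  have : Sfun = fun z => ∑' n : ℕ, cc n * z^n := rfl
  rw [this, ← h2.tsum_eq]
  exact key

lemma S_eq_T {y : ℝ} (hy : |y| < 1) : Sfun y = 2*(1-y) * Tfun y := by
  have hT : HasSum (fun j : ℕ => ((j:ℝ)+1) * cc (j+1) * y^j) (Tfun y) :=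
    (summable_T hy).hasSum
  have h2T := hT.mul_left 2
  have hyT := hT.mul_left (2*y)
  have hv1 : HasSum (fun j : ℕ => (fun m : ℕ => 2*(m:ℝ)*cc m*y^m) (j+1)) (2*y*Tfun y) := by
    have heq : (fun j : ℕ => (fun m : ℕ => 2*(m:ℝ)*cc m*y^m) (j+1))
        = fun j : ℕ => 2*y*(((j:ℝ)+1) * cc (j+1) * y^j) := by
      funext j; push_cast; ring
    rw [heq]; exact hyT
  have hv : HasSum (fun m : ℕ => 2*(m:ℝ)*cc m*y^m) (2*y*Tfun y) := by
    have := (hasSum_nat_add_iff (f := fun m : ℕ => 2*(m:ℝ)*cc m*y^m) 1).mp hv1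
    simpa using this
  have hsub := h2T.sub hv
  have hS2 : HasSum (fun j : ℕ => cc j * y^j) (2*Tfun y - 2*y*Tfun y) := by
    have heq2 : (fun j : ℕ => 2*(((j:ℝ)+1) * cc (j+1) * y^j) - 2*(j:ℝ)*cc j*y^j)
        = fun j : ℕ => cc j * y^j := by
      funext j
      linear_combination (2*y^j) * cc_rec j
    rwa [heq2] at hsub
  rw [Sfun, hS2.tsum_eq]; ring

lemma S_sqrt {y : ℝ} (hy : |y| < 1) : Real.sqrt (1-y) * Sfun y = 1 := by
  set G : ℝ → ℝ := fun z => Real.sqrt (1-z) * Sfun z with hG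
  have hderiv : ∀ z ∈ Set.Ioo (-1:ℝ) 1, HasDerivAt G 0 z := by
    intro z hz
    have hz1 : 0 < 1 - z := by linarith [hz.2]
    have habs : |z| < 1 := abs_lt.mpr ⟨hz.1, hz.2⟩
    have h1 : HasDerivAt (fun w : ℝ => 1 - w) (-1) z := by
      simpa using (hasDerivAt_id z).const_sub 1
    have hsq : HasDerivAt (fun w => Real.sqrt (1-w)) (-1/(2*Real.sqrt (1-z))) z :=
      h1.sqrt hz1.ne'
    have hmul := hsq.mul (hasDerivAt_S habs)
    have hs : 0 < Real.sqrt (1-z) := Real.sqrt_pos.mpr hz1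
    have hs2 : Real.sqrt (1-z)^2 = 1 - z := Real.sq_sqrt hz1.le
    have hval : -1/(2*Real.sqrt (1-z)) * Sfun z + Real.sqrt (1-z) * Tfun z = 0 := by
      rw [S_eq_T habs]
      field_simp
      linear_combination (Tfun z) * hs2
    rw [hval] at hmul
    exact hmul
  have hy' : y ∈ Set.Ioo (-1:ℝ) 1 := ⟨(abs_lt.mp hy).1, (abs_lt.mp hy).2⟩
  have h0 : (0:ℝ) ∈ Set.Ioo (-1:ℝ) 1 := by norm_num
  have hS0 : Sfun 0 = 1 := by
    have h := hasSum_single (f := fun j : ℕ => cc j * (0:ℝ)^j) 0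
      (fun b hb => by simp [zero_pow hb])
    have h' : HasSum (fun j : ℕ => cc j * (0:ℝ)^j) 1 := by
      simpa [cc_zero] using h
    exact h'.tsum_eq
  have := const_of_hasDerivAt_zero hderiv hy' h0
  rw [hG] at this
  simp only [hS0, sub_zero, Real.sqrt_one, mul_one] at this
  exact this

lemma S_formula {y : ℝ} (hy : |y| < 1) : Sfun y = 1 / Real.sqrt (1-y) := by
  have hz1 : 0 < 1 - y := by linarith [(abs_lt.mp hy).2]
  have hs : 0 < Real.sqrt (1-y) := Real.sqrt_pos.mpr hz1
  field_simp
  linarith [S_sqrt hy, mul_comm (Real.sqrt (1-y)) (Sfun y)]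

lemma U_val {y : ℝ} (hy : |y| < 1) :
    Ufun y = 1/(Real.sqrt (1-y) * (1 + Real.sqrt (1-y))) := by
  have hz1 : 0 < 1 - y := by linarith [(abs_lt.mp hy).2]
  have hs : 0 < Real.sqrt (1-y) := Real.sqrt_pos.mpr hz1
  have hs2 : Real.sqrt (1-y)^2 = 1 - y := Real.sq_sqrt hz1.le
  by_cases hy0 : y = 0
  · subst hy0
    have h := hasSum_single (f := fun j : ℕ => cc (j+1) * (0:ℝ)^j) 0
      (fun b hb => by simp [zero_pow hb])
    have h' : HasSum (fun j : ℕ => cc (j+1) * (0:ℝ)^j) (1/2) := by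
      simpa [cc_one] using h
    rw [Ufun, h'.tsum_eq]
    norm_num
  · set s := Real.sqrt (1-y) with hsdef
    have hU : HasSum (fun j : ℕ => cc (j+1) * y^j) (Ufun y) := (summable_U hy).hasSum
    have h1 : HasSum (fun j : ℕ => (fun m : ℕ => cc m * y^m) (j+1)) (y * Ufun y) := by
      have heq : (fun j : ℕ => (fun m : ℕ => cc m * y^m) (j+1))
          = fun j : ℕ => y * (cc (j+1) * y^j) := by
        funext j; ring
      rw [heq]; exact hU.mul_left y
    have h2 : HasSum (fun m : ℕ => cc m * y^m) (y * Ufun y + 1) := by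
      have := (hasSum_nat_add_iff (f := fun m : ℕ => cc m * y^m) 1).mp h1
      simpa [cc_zero] using this
    have hSU : Sfun y = y * Ufun y + 1 := h2.tsum_eq
    have hEq : (y * Ufun y + 1) * s = 1 := by
      have := S_formula hy
      rw [hSU] at this
      rw [this]
      field_simp
      exact hsdef
    have hs1 : s ≠ 1 := by
      intro h
      apply hy0
      have : (1:ℝ) - y = 1 := by rw [← hs2, h]; norm_num
      linarith
    have h1s : (1:ℝ) - s ≠ 0 := sub_ne_zero.mpr (Ne.symm hs1)
    have hkey : Ufun y * (s*(1+s)) * (1-s) = 1 * (1-s) := by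
      linear_combination hEq - (Ufun y * s) * hs2
    have hfin := mul_right_cancel₀ h1s hkey
    rw [eq_div_iff (by positivity : s*(1+s) ≠ 0)]
    linarith [hfin]

lemma hasDerivAt_f {y : ℝ} (hy : |y| < 1) :
    HasDerivAt (fun z : ℝ => ∑' j : ℕ, cc (j+1)/((j:ℝ)+1) * z^(j+1)) (Ufun y) y := by
  set r : ℝ := (1 + |y|)/2 with hr
  have hr0 : 0 ≤ r := by positivity
  have hr1 : r < 1 := by rw [hr]; linarith
  have hyr : |y| < r := by rw [hr]; linarith [abs_nonneg y]
  have hu : Summable (fun n : ℕ => r^n) := summable_geometric_of_lt_one hr0 hr1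
  have hball : y ∈ Metric.ball (0:ℝ) r := by
    rw [Metric.mem_ball, Real.dist_eq, sub_zero]; exact hyr
  have h0ball : (0:ℝ) ∈ Metric.ball (0:ℝ) r := by
    rw [Metric.mem_ball, Real.dist_eq, sub_zero, abs_zero]
    linarith [abs_nonneg y]
  have key := hasDerivAt_tsum_of_isPreconnected (F := ℝ)
    (u := fun n : ℕ => r^n) (t := Metric.ball (0:ℝ) r)
    (g := fun n z => cc (n+1)/((n:ℝ)+1) * z^(n+1))
    (g' := fun n z => cc (n+1)/((n:ℝ)+1) * ((((n:ℕ)+1 : ℕ):ℝ) * z^(n+1-1)))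
    (y₀ := 0) (y := y) hu Metric.isOpen_ball
    (convex_ball (0:ℝ) r).isPreconnected
    (fun n z _ => (hasDerivAt_pow (n+1) z).const_mul (cc (n+1)/((n:ℝ)+1)))
    (fun n z hz => by
      have hzr : |z| ≤ r := by
        rw [Metric.mem_ball, Real.dist_eq, sub_zero] at hz; exact hz.le
      have hn1 : ((n:ℝ)+1) ≠ 0 := by positivity
      have heq : cc (n+1)/((n:ℝ)+1) * ((((n:ℕ)+1 : ℕ):ℝ) * z^(n+1-1)) = cc (n+1) * z^n := by
        simp only [Nat.add_sub_cancel]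
        push_cast
        field_simp
      have hb : ‖cc (n+1)/((n:ℝ)+1) * ((((n:ℕ)+1 : ℕ):ℝ) * z^(n+1-1))‖ ≤ r^n := by
        rw [heq, Real.norm_eq_abs, abs_mul, abs_pow, abs_of_pos (cc_pos (n+1))]
        calc cc (n+1) * |z|^n ≤ 1 * r^n := by
              gcongr
              · exact cc_le_one (n+1)
          _ = r^n := one_mul _
      exact hb)
    h0ball
    ((hasSum_single (f := fun n : ℕ => cc (n+1)/((n:ℝ)+1) * (0:ℝ)^(n+1)) 0
      (fun b hb => by simp)).summable)
    hball
  have hU : HasSum (fun j : ℕ => cc (j+1) * y^j) (Ufun y) := (summable_U hy).hasSum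
  have h2 : HasSum (fun n : ℕ => cc (n+1)/((n:ℝ)+1) * ((((n:ℕ)+1 : ℕ):ℝ) * y^(n+1-1)))
      (Ufun y) := by
    have heq : (fun n : ℕ => cc (n+1)/((n:ℝ)+1) * ((((n:ℕ)+1 : ℕ):ℝ) * y^(n+1-1)))
        = fun n : ℕ => cc (n+1) * y^n := by
      funext n
      have hn1 : ((n:ℝ)+1) ≠ 0 := by positivity
      simp only [Nat.add_sub_cancel]
      push_cast
      field_simp
    rw [heq]; exact hU
  rw [← h2.tsum_eq]
  exact key

lemma hasDerivAt_F {y : ℝ} (hy : |y| < 1) :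
    HasDerivAt (fun z : ℝ => -2 * Real.log ((1 + Real.sqrt (1-z))/2))
      (1/(Real.sqrt (1-y) * (1 + Real.sqrt (1-y)))) y := by
  have hz1 : 0 < 1 - y := by linarith [(abs_lt.mp hy).2]
  have hs : 0 < Real.sqrt (1-y) := Real.sqrt_pos.mpr hz1
  have h1 : HasDerivAt (fun w : ℝ => 1 - w) (-1) y := by
    simpa using (hasDerivAt_id y).const_sub 1
  have h2 : HasDerivAt (fun w => Real.sqrt (1-w)) (-1/(2*Real.sqrt (1-y))) y :=
    h1.sqrt hz1.ne'
  have h3 : HasDerivAt (fun w => (1 + Real.sqrt (1-w))/2) ((-1/(2*Real.sqrt (1-y)))/2) y :=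
    (h2.const_add 1).div_const 2
  have h4 := h3.log (by positivity : (1 + Real.sqrt (1-y))/2 ≠ 0)
  have h5 := h4.const_mul (-2 : ℝ)
  refine h5.congr_deriv ?_
  field_simp

lemma master (y : ℝ) (hy : |y| < 1) :
    HasSum (fun j : ℕ => cc (j+1)/((j:ℝ)+1) * y^(j+1))
      (-2 * Real.log ((1 + Real.sqrt (1-y))/2)) := by
  have hsum : Summable (fun j : ℕ => cc (j+1)/((j:ℝ)+1) * y^(j+1)) := by
    refine Summable.of_norm_bounded (summable_geometric_of_lt_one (abs_nonneg y) hy)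
      fun j => ?_
    have hn1 : (0:ℝ) < (j:ℝ)+1 := by positivity
    rw [Real.norm_eq_abs, abs_mul, abs_pow, abs_of_pos (div_pos (cc_pos (j+1)) hn1)]
    have hc : cc (j+1)/((j:ℝ)+1) ≤ 1 := by
      rw [div_le_one hn1]
      calc cc (j+1) ≤ 1 := cc_le_one (j+1)
        _ ≤ (j:ℝ)+1 := by linarith [Nat.cast_nonneg (α := ℝ) j]
    calc cc (j+1)/((j:ℝ)+1) * |y|^(j+1) ≤ 1 * (|y|^j * 1) := by
          have h1 : |y| ≤ 1 := hy.le
          rw [pow_succ]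
          gcongr
      _ = |y|^j := by ring
  set φ : ℝ → ℝ := fun z => ∑' j : ℕ, cc (j+1)/((j:ℝ)+1) * z^(j+1) with hφ
  set F : ℝ → ℝ := fun z => -2 * Real.log ((1 + Real.sqrt (1-z))/2) with hF
  have hdiff : ∀ z ∈ Set.Ioo (-1:ℝ) 1, HasDerivAt (fun w => φ w - F w) 0 z := by
    intro z hz
    have habs : |z| < 1 := abs_lt.mpr ⟨hz.1, hz.2⟩
    have h := (hasDerivAt_f habs).sub (hasDerivAt_F habs)
    rwa [U_val habs, sub_self] at h
  have hy' : y ∈ Set.Ioo (-1:ℝ) 1 := ⟨(abs_lt.mp hy).1, (abs_lt.mp hy).2⟩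
  have h0 : (0:ℝ) ∈ Set.Ioo (-1:ℝ) 1 := by norm_num
  have hconst := const_of_hasDerivAt_zero hdiff hy' h0
  have hφ0 : φ 0 = 0 := by
    rw [hφ]
    simp
  have hF0 : F 0 = 0 := by
    rw [hF]
    norm_num
  have hval : φ y = F y := by
    have : φ y - F y = φ 0 - F 0 := hconst
    rw [hφ0, hF0] at this
    linarith
  have := hsum.hasSum
  rwa [show (∑' j : ℕ, cc (j+1)/((j:ℝ)+1) * y^(j+1)) = φ y from rfl, hval] at this

theorem stmt13 (x : ℝ) (hx0 : 0 < x) (hx1 : x < 1) :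
    HasSum (fun j : ℕ =>
        poch (1/2) (j + 1) / (((j : ℝ) + 1) * (Nat.factorial (j + 1) : ℝ)) * x ^ (j + 1))
      (2 * Real.log (2 / (1 + Real.sqrt (1 - x))))
    ∧ HasSum (fun j : ℕ =>
        poch (1/2) (j + 1) / (((j : ℝ) + 1) * (Nat.factorial (j + 1) : ℝ)) * (-x) ^ (j + 1))
      (-2 * Real.log ((1 + Real.sqrt (1 + x)) / 2)) := by
  have hfeq : ∀ j : ℕ, poch (1/2) (j + 1) / (((j : ℝ) + 1) * (Nat.factorial (j + 1) : ℝ))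
      = cc (j+1)/((j:ℝ)+1) := by
    intro j
    rw [cc, div_div, mul_comm]
  constructor
  · have hm := master x (abs_lt.mpr ⟨by linarith, hx1⟩)
    have hs1 : (0:ℝ) < 1 + Real.sqrt (1 - x) := by positivity
    have hlog : 2 * Real.log (2 / (1 + Real.sqrt (1 - x)))
        = -2 * Real.log ((1 + Real.sqrt (1-x))/2) := by
      rw [Real.log_div two_ne_zero hs1.ne', Real.log_div hs1.ne' two_ne_zero]
      ring
    rw [hlog]
    have heqf : (fun j : ℕ =>
        poch (1/2) (j + 1) / (((j : ℝ) + 1) * (Nat.factorial (j + 1) : ℝ)) * x ^ (j + 1))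
        = fun j : ℕ => cc (j+1)/((j:ℝ)+1) * x^(j+1) := by
      funext j; rw [hfeq j]
    rw [heqf]
    exact hm
  · have hm := master (-x) (by rw [abs_neg]; exact abs_lt.mpr ⟨by linarith, hx1⟩)
    rw [show (1:ℝ) - -x = 1 + x by ring] at hm
    have heqf : (fun j : ℕ =>
        poch (1/2) (j + 1) / (((j : ℝ) + 1) * (Nat.factorial (j + 1) : ℝ)) * (-x) ^ (j + 1))
        = fun j : ℕ => cc (j+1)/((j:ℝ)+1) * (-x)^(j+1) := by
      funext j; rw [hfeq j]
    rw [heqf]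
    exact hm
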